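/- Let B be a finitely semi-graded K-algebra generated in degree 1 with B_0 = K, and let M be a point module for B with M = B·m_0, m_0 ∈ M_0. Then the formula (b_p + F_{p−1}(B))·(m + F_{n−1}(M)) := b_p m + F_{p+n−1}(M) (for b_p ∈ B_p, m ∈ M_n) is well defined and makes Gr(M) a graded left Gr(B)-module; moreover Gr(M) = Gr(B)·(m_0 + F_{−1}(M)) is cyclic generated in degree 0 and dim_K Gr(M)_n = 1 for all n ≥ 0. In particular Gr(M) is a point module for the finitely graded algebra Gr(B). -/

import Mathlib

universe u v w

/-- The standard filtration `F_n = (deg 0) ⊕ ⋯ ⊕ (deg n)` associated to a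
semi-graduation of a `K`-module. -/
def sgFilt {K M : Type*} [Field K] [AddCommGroup M] [Module K M]
    (deg : ℕ → Submodule K M) (n : ℕ) : Submodule K M :=
  ⨆ k ∈ Set.Iic n, deg k

/-- `F_{n−1}`, with `F_{−1} = 0`. -/
def sgFiltPrev {K M : Type*} [Field K] [AddCommGroup M] [Module K M]
    (deg : ℕ → Submodule K M) : ℕ → Submodule K M
  | 0 => ⊥
  | (n + 1) => sgFilt deg n

namespace FSGaux

variable {K : Type u} [Field K]

section filt

variable {V : Type*} [AddCommGroup V] [Module K V] (deg : ℕ → Submodule K V)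

theorem le_sgFilt {k n : ℕ} (h : k ≤ n) : deg k ≤ sgFilt deg n :=
  le_iSup₂ (f := fun k (_ : k ∈ Set.Iic n) => deg k) k h

theorem sgFilt_mono {m n : ℕ} (h : m ≤ n) : sgFilt deg m ≤ sgFilt deg n :=
  iSup₂_le fun k hk => le_sgFilt deg (le_trans hk h)

theorem sgFilt_zero : sgFilt deg 0 = deg 0 := by
  refine le_antisymm (iSup₂_le fun k hk => ?_) (le_sgFilt deg le_rfl)
  have : k = 0 := Nat.le_zero.mp hk
  subst this; exact le_rfl

theorem sgFilt_succ (n : ℕ) : sgFilt deg (n + 1) = sgFilt deg n ⊔ deg (n + 1) := by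
  refine le_antisymm (iSup₂_le fun k hk => ?_)
    (sup_le (sgFilt_mono deg (Nat.le_succ n)) (le_sgFilt deg le_rfl))
  rcases Nat.lt_or_ge k (n + 1) with h | h
  · exact le_sup_of_le_left (le_sgFilt deg (Nat.lt_succ_iff.mp h))
  · have : k = n + 1 := le_antisymm hk h
    subst this; exact le_sup_right

theorem sgFiltPrev_le (n : ℕ) : sgFiltPrev deg n ≤ sgFilt deg n := by
  cases n with
  | zero => exact bot_le
  | succ n => exact sgFilt_mono deg (Nat.le_succ n)

end filt

section proj

variable {V : Type*} [AddCommGroup V] [Module K V] {deg : ℕ → Submodule K V}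

noncomputable def proj (hI : DirectSum.IsInternal deg) (n : ℕ) : V →ₗ[K] V :=
  (deg n).subtype ∘ₗ (DirectSum.component K ℕ (fun i => deg i) n) ∘ₗ
    (LinearEquiv.ofBijective (DirectSum.coeLinearMap deg) hI).symm.toLinearMap

theorem proj_mem (hI : DirectSum.IsInternal deg) (n : ℕ) (v : V) : proj hI n v ∈ deg n := by
  simp only [proj, LinearMap.comp_apply]
  exact Submodule.coe_mem _

theorem proj_of_mem_same (hI : DirectSum.IsInternal deg) {n : ℕ} {v : V} (hv : v ∈ deg n) :
    proj hI n v = v := by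
  simp only [proj, LinearMap.comp_apply, Submodule.coe_subtype, LinearEquiv.coe_coe]
  rw [← DirectSum.apply_eq_component, hI.ofBijective_coeLinearMap_of_mem hv]

theorem proj_of_mem_ne (hI : DirectSum.IsInternal deg) {k n : ℕ} {v : V} (hv : v ∈ deg k)
    (h : k ≠ n) : proj hI n v = 0 := by
  simp only [proj, LinearMap.comp_apply, Submodule.coe_subtype, LinearEquiv.coe_coe]
  rw [← DirectSum.apply_eq_component, hI.ofBijective_coeLinearMap_of_mem_ne h hv]
  rfl

theorem proj_eq_zero_of_filt_lt (hI : DirectSum.IsInternal deg) {q n : ℕ} {v : V}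
    (hv : v ∈ sgFilt deg q) (h : q < n) : proj hI n v = 0 := by
  induction q generalizing v with
  | zero =>
    rw [sgFilt_zero] at hv
    exact proj_of_mem_ne hI hv (Nat.ne_of_lt h)
  | succ q ih =>
    rw [sgFilt_succ] at hv
    rcases Submodule.mem_sup.mp hv with ⟨u, hu, w, hw, rfl⟩
    rw [map_add, ih hu (lt_trans (Nat.lt_succ_self q) h),
      proj_of_mem_ne hI hw (Nat.ne_of_lt h), add_zero]

theorem sub_proj_mem (hI : DirectSum.IsInternal deg) {n : ℕ} {v : V} (hv : v ∈ sgFilt deg n) :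
    v - proj hI n v ∈ sgFiltPrev deg n := by
  cases n with
  | zero =>
    rw [sgFilt_zero] at hv
    rw [proj_of_mem_same hI hv, sub_self]
    exact Submodule.zero_mem _
  | succ n =>
    rw [sgFilt_succ] at hv
    rcases Submodule.mem_sup.mp hv with ⟨u, hu, w, hw, rfl⟩
    rw [map_add, proj_eq_zero_of_filt_lt hI hu (Nat.lt_succ_self n),
      proj_of_mem_same hI hw, zero_add, add_sub_cancel_right]
    exact hu

theorem mem_sgFiltPrev_iff_proj_eq_zero (hI : DirectSum.IsInternal deg) {n : ℕ} {v : V}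
    (hv : v ∈ sgFilt deg n) : v ∈ sgFiltPrev deg n ↔ proj hI n v = 0 := by
  constructor
  · intro h
    cases n with
    | zero =>
      have : v = 0 := h
      rw [this, map_zero]
    | succ n => exact proj_eq_zero_of_filt_lt hI h (Nat.lt_succ_self n)
  · intro h
    have := sub_proj_mem hI hv
    rwa [h, sub_zero] at this

end proj

section act

variable {B : Type v} [Ring B] [Algebra K B] {M : Type v} [AddCommGroup M] [Module K M]
  [Module B M] [IsScalarTower K B M]

theorem kB_smul (k : K) (b : B) (m : M) : b • (k • m) = k • (b • m) := by
  rw [← algebraMap_smul B k m, ← mul_smul, ← Algebra.commutes k b, mul_smul, algebraMap_smul]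

/-- Left multiplication by `b : B` on `M`, as a `K`-linear map. -/
def actL (b : B) : M →ₗ[K] M where
  toFun := (b • ·)
  map_add' := fun x y => smul_add b x y
  map_smul' := fun k m => kB_smul k b m

/-- The map `b ↦ b • m`, as a `K`-linear map. -/
def actR (m : M) : B →ₗ[K] M where
  toFun := (· • m)
  map_add' := fun a b => add_smul a b m
  map_smul' := fun k b => smul_assoc k b m

@[simp] theorem actL_apply (b : B) (m : M) : actL (K := K) b m = b • m := rfl
@[simp] theorem actR_apply (b : B) (m : M) : actR (K := K) m b = b • m := rfl

variable {Bdeg : ℕ → Submodule K B} {Mdeg : ℕ → Submodule K M}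

theorem smul_filt (hMsmul : ∀ p q : ℕ, ∀ b ∈ Bdeg p, ∀ v ∈ Mdeg q,
      b • v ∈ sgFilt Mdeg (p + q))
    {p q : ℕ} {b : B} {v : M} (hb : b ∈ sgFilt Bdeg p) (hv : v ∈ sgFilt Mdeg q) :
    b • v ∈ sgFilt Mdeg (p + q) := by
  have h1 : ∀ j, j ≤ p → ∀ b ∈ Bdeg j, ∀ v ∈ sgFilt Mdeg q, b • v ∈ sgFilt Mdeg (p + q) := by
    intro j hj b hb v hv
    have hle : sgFilt Mdeg q ≤ (sgFilt Mdeg (p + q)).comap (actL (K := K) b) := by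
      refine iSup₂_le fun k hk => ?_
      intro w hw
      exact sgFilt_mono Mdeg (Nat.add_le_add hj hk) (hMsmul j k b hb w hw)
    exact hle hv
  have hle : sgFilt Bdeg p ≤ (sgFilt Mdeg (p + q)).comap (actR (K := K) v) := by
    refine iSup₂_le fun j hj => ?_
    intro c hc
    exact h1 j hj c hc v hv
  exact hle hb

theorem mul_filt (hmul : ∀ m n : ℕ, ∀ a b : B, a ∈ Bdeg m → b ∈ Bdeg n →
      a * b ∈ sgFilt Bdeg (m + n))
    {p q : ℕ} {a b : B} (ha : a ∈ sgFilt Bdeg p) (hb : b ∈ sgFilt Bdeg q) :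
    a * b ∈ sgFilt Bdeg (p + q) := by
  have h1 : ∀ j, j ≤ p → ∀ a ∈ Bdeg j, ∀ b ∈ sgFilt Bdeg q, a * b ∈ sgFilt Bdeg (p + q) := by
    intro j hj a ha b hb
    have hle : sgFilt Bdeg q ≤ (sgFilt Bdeg (p + q)).comap (LinearMap.mulLeft K a) := by
      refine iSup₂_le fun k hk => ?_
      intro w hw
      exact sgFilt_mono Bdeg (Nat.add_le_add hj hk) (hmul j k a w ha hw)
    exact hle hb
  have hle : sgFilt Bdeg p ≤ (sgFilt Bdeg (p + q)).comap (LinearMap.mulRight K b) := by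
    refine iSup₂_le fun j hj => ?_
    intro c hc
    exact h1 j hj c hc b hb
  exact hle ha

end act

section cyclic

variable {B : Type v} [Ring B] [Algebra K B] {M : Type v} [AddCommGroup M] [Module K M]
  [Module B M] [IsScalarTower K B M]
variable {Bdeg : ℕ → Submodule K B} {Mdeg : ℕ → Submodule K M}

theorem finiteDimensional_sgFilt (hdim : ∀ n : ℕ, Module.finrank K (Mdeg n) = 1) (n : ℕ) :
    FiniteDimensional K (sgFilt Mdeg n) := by
  induction n with
  | zero =>
    rw [sgFilt_zero]
    exact Module.finite_of_finrank_eq_succ (hdim 0)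
  | succ n ih =>
    rw [sgFilt_succ]
    haveI := ih
    haveI : FiniteDimensional K (Mdeg (n + 1)) := Module.finite_of_finrank_eq_succ (hdim (n + 1))
    infer_instance

theorem disjoint_sgFilt_next (hMinternal : DirectSum.IsInternal Mdeg) (n : ℕ) :
    Disjoint (sgFilt Mdeg n) (Mdeg (n + 1)) := by
  have h := (hMinternal.submodule_iSupIndep (n + 1))
  refine (h.mono_right ?_).symm
  refine iSup₂_le fun k hk => ?_
  have hkne : k ≠ n + 1 := by
    intro hkeq; subst hkeq; exact absurd (Set.mem_Iic.mp hk) (by omega)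
  exact le_iSup₂ (f := fun j (_ : j ≠ n + 1) => Mdeg j) k hkne

theorem finrank_sgFilt (hMinternal : DirectSum.IsInternal Mdeg)
    (hdim : ∀ n : ℕ, Module.finrank K (Mdeg n) = 1) (n : ℕ) :
    Module.finrank K (sgFilt Mdeg n) = n + 1 := by
  induction n with
  | zero => rw [sgFilt_zero]; exact hdim 0
  | succ n ih =>
    haveI := finiteDimensional_sgFilt (K := K) hdim n
    haveI : FiniteDimensional K (Mdeg (n + 1)) := Module.finite_of_finrank_eq_succ (hdim (n + 1))
    have key := Submodule.finrank_sup_add_finrank_inf_eq (sgFilt Mdeg n) (Mdeg (n + 1))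
    rw [disjoint_iff.mp (disjoint_sgFilt_next hMinternal n)] at key
    rw [sgFilt_succ]
    rw [finrank_bot, add_zero, ih, hdim (n + 1)] at key
    omega

theorem map_actR_le
    (hMsmul : ∀ p q : ℕ, ∀ b ∈ Bdeg p, ∀ v ∈ Mdeg q, b • v ∈ sgFilt Mdeg (p + q))
    {m₀ : M} (hm₀ : m₀ ∈ Mdeg 0) (n : ℕ) :
    (sgFilt Bdeg n).map (actR (K := K) m₀) ≤ sgFilt Mdeg n := by
  rintro _ ⟨b, hb, rfl⟩
  have hm₀' : m₀ ∈ sgFilt Mdeg 0 := by rw [sgFilt_zero]; exact hm₀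
  have := smul_filt (K := K) hMsmul hb hm₀'
  rwa [Nat.add_zero] at this

theorem exists_ne_zero_deg (hdim : ∀ n : ℕ, Module.finrank K (Mdeg n) = 1) (n : ℕ) : ∃ x : Mdeg n, x ≠ 0 := by
  haveI : FiniteDimensional K (Mdeg n) := Module.finite_of_finrank_eq_succ (hdim n)
  haveI : Nontrivial (Mdeg n) := Module.nontrivial_of_finrank_pos (R := K)
    (by rw [hdim n]; omega)
  exact exists_ne 0

theorem m₀_ne_zero {m₀ : M} (hcyc : Submodule.span B {m₀} = ⊤)
    (hdim : ∀ n : ℕ, Module.finrank K (Mdeg n) = 1) : m₀ ≠ 0 := by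
  intro h0
  subst h0
  rw [Submodule.span_zero_singleton] at hcyc
  obtain ⟨x, hx⟩ := exists_ne_zero_deg (K := K) (Mdeg := Mdeg) hdim 1
  have : (x : M) ∈ (⊤ : Submodule B M) := trivial
  rw [← hcyc] at this
  have : (x : M) = 0 := this
  exact hx (Subtype.ext this)

theorem not_stall (hMinternal : DirectSum.IsInternal Mdeg)
    (hmul : ∀ m n : ℕ, ∀ a b : B, a ∈ Bdeg m → b ∈ Bdeg n → a * b ∈ sgFilt Bdeg (m + n))
    (hdeg0 : Bdeg 0 = Submodule.span K {(1 : B)})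
    (hgen : Algebra.adjoin K (Bdeg 1 : Set B) = ⊤)
    (hMsmul : ∀ p q : ℕ, ∀ b ∈ Bdeg p, ∀ v ∈ Mdeg q, b • v ∈ sgFilt Mdeg (p + q))
    {m₀ : M} (hm₀ : m₀ ∈ Mdeg 0) (hcyc : Submodule.span B {m₀} = ⊤)
    (hdim : ∀ n : ℕ, Module.finrank K (Mdeg n) = 1) (n : ℕ)
    (hstall : (sgFilt Bdeg (n + 1)).map (actR (K := K) m₀) ≤
      (sgFilt Bdeg n).map (actR (K := K) m₀)) : False := by
  set W := (sgFilt Bdeg n).map (actR (K := K) m₀) with hW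
  have hWle : W ≤ sgFilt Mdeg n := map_actR_le (K := K) hMsmul hm₀ n
  have hsmulW : ∀ b : B, ∀ w ∈ W, b • w ∈ W := by
    intro b
    have hb : b ∈ Algebra.adjoin K (Bdeg 1 : Set B) := by rw [hgen]; trivial
    induction hb using Algebra.adjoin_induction with
    | mem x hx =>
      rintro _ ⟨c, hc, rfl⟩
      refine hstall ⟨x * c, ?_, ?_⟩
      · have hx1 : x ∈ sgFilt Bdeg 1 := le_sgFilt Bdeg le_rfl hx
        have := mul_filt (K := K) hmul hx1 hc
        rwa [Nat.add_comm] at this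
      · rw [actR_apply, actR_apply, mul_smul]
    | algebraMap r =>
      intro w hw
      rw [algebraMap_smul]
      exact W.smul_mem r hw
    | add x y hx hy ihx ihy =>
      intro w hw
      rw [add_smul]
      exact W.add_mem (ihx w hw) (ihy w hw)
    | mul x y hx hy ihx ihy =>
      intro w hw
      rw [mul_smul]
      exact ihx _ (ihy w hw)
  let WB : Submodule B M :=
    { carrier := (W : Set M)
      add_mem' := fun ha hb => W.add_mem ha hb
      zero_mem' := W.zero_mem
      smul_mem' := fun b {w} hw => hsmulW b w hw }
  have hm₀W : m₀ ∈ W := by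
    refine ⟨1, ?_, one_smul B m₀⟩
    refine le_sgFilt Bdeg (Nat.zero_le n) ?_
    rw [hdeg0]
    exact Submodule.mem_span_singleton_self 1
  have htop : ∀ m : M, m ∈ W := by
    intro m
    have hmm : m ∈ (⊤ : Submodule B M) := trivial
    rw [← hcyc] at hmm
    have hsle : Submodule.span B {m₀} ≤ WB :=
      Submodule.span_le.mpr (Set.singleton_subset_iff.mpr hm₀W)
    exact hsle hmm
  obtain ⟨x, hx⟩ := exists_ne_zero_deg (K := K) (Mdeg := Mdeg) hdim (n + 1)
  have hxW : (x : M) ∈ sgFilt Mdeg n := hWle (htop x)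
  have h0 : proj hMinternal (n + 1) (x : M) = 0 :=
    proj_eq_zero_of_filt_lt hMinternal hxW (Nat.lt_succ_self n)
  rw [proj_of_mem_same hMinternal x.2] at h0
  exact hx (Subtype.ext h0)

theorem filt_cyclic (hMinternal : DirectSum.IsInternal Mdeg)
    (hmul : ∀ m n : ℕ, ∀ a b : B, a ∈ Bdeg m → b ∈ Bdeg n → a * b ∈ sgFilt Bdeg (m + n))
    (hdeg0 : Bdeg 0 = Submodule.span K {(1 : B)})
    (hgen : Algebra.adjoin K (Bdeg 1 : Set B) = ⊤)
    (hMsmul : ∀ p q : ℕ, ∀ b ∈ Bdeg p, ∀ v ∈ Mdeg q, b • v ∈ sgFilt Mdeg (p + q))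
    {m₀ : M} (hm₀ : m₀ ∈ Mdeg 0) (hcyc : Submodule.span B {m₀} = ⊤)
    (hdim : ∀ n : ℕ, Module.finrank K (Mdeg n) = 1) (n : ℕ) :
    (sgFilt Bdeg n).map (actR (K := K) m₀) = sgFilt Mdeg n := by
  induction n with
  | zero =>
    haveI hfin : FiniteDimensional K (sgFilt Mdeg 0) := finiteDimensional_sgFilt (K := K) hdim 0
    have hle : (sgFilt Bdeg 0).map (actR (K := K) m₀) ≤ sgFilt Mdeg 0 :=
      map_actR_le (K := K) hMsmul hm₀ 0
    haveI : FiniteDimensional K ((sgFilt Bdeg 0).map (actR (K := K) m₀)) :=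
      Submodule.finiteDimensional_of_le hle
    refine Submodule.eq_of_le_of_finrank_le hle ?_
    rw [finrank_sgFilt hMinternal hdim 0]
    have hnt : Nontrivial ((sgFilt Bdeg 0).map (actR (K := K) m₀)) := by
      refine ⟨⟨⟨m₀, ?_⟩, 0, ?_⟩⟩
      · refine ⟨1, ?_, one_smul B m₀⟩
        rw [sgFilt_zero, hdeg0]
        exact Submodule.mem_span_singleton_self 1
      · intro h
        exact m₀_ne_zero (K := K) hcyc hdim (by simpa using congrArg Subtype.val h)
    have := Module.finrank_pos_iff (R := K)
      (M := ((sgFilt Bdeg 0).map (actR (K := K) m₀))) |>.mpr hnt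
    omega
  | succ n ih =>
    have hle : (sgFilt Bdeg (n + 1)).map (actR (K := K) m₀) ≤ sgFilt Mdeg (n + 1) :=
      map_actR_le (K := K) hMsmul hm₀ (n + 1)
    haveI : FiniteDimensional K (sgFilt Mdeg (n + 1)) := finiteDimensional_sgFilt (K := K) hdim _
    haveI : FiniteDimensional K ((sgFilt Bdeg (n + 1)).map (actR (K := K) m₀)) :=
      Submodule.finiteDimensional_of_le hle
    have hlow : sgFilt Mdeg n ≤ (sgFilt Bdeg (n + 1)).map (actR (K := K) m₀) := by
      rw [← ih]
      exact Submodule.map_mono (sgFilt_mono Bdeg (Nat.le_succ n))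
    have hne : ¬ ((sgFilt Bdeg (n + 1)).map (actR (K := K) m₀) ≤ sgFilt Mdeg n) := by
      intro hcon
      rw [← ih] at hcon
      exact not_stall hMinternal hmul hdeg0 hgen hMsmul hm₀ hcyc hdim n hcon
    refine Submodule.eq_of_le_of_finrank_le hle ?_
    rw [finrank_sgFilt hMinternal hdim (n + 1)]
    by_contra hcon
    push_neg at hcon
    have hfr : Module.finrank K ((sgFilt Bdeg (n + 1)).map (actR (K := K) m₀)) ≤ n + 1 := by
      omega
    have : sgFilt Mdeg n = (sgFilt Bdeg (n + 1)).map (actR (K := K) m₀) := by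
      haveI : FiniteDimensional K (sgFilt Mdeg n) := finiteDimensional_sgFilt (K := K) hdim n
      refine Submodule.eq_of_le_of_finrank_le hlow ?_
      rw [finrank_sgFilt hMinternal hdim n]
      exact hfr
    rw [← this] at hne
    exact hne le_rfl

end cyclic

section theta

variable {B : Type v} [Ring B] [Algebra K B] {M : Type v} [AddCommGroup M] [Module K M]
  [Module B M] [IsScalarTower K B M]
variable {Bdeg : ℕ → Submodule K B} {Mdeg : ℕ → Submodule K M}
variable {G : Type w} [Ring G] [Algebra K G]

/-- `b ↦ π_p (b • m₀)` on `F_p(B)`. -/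
noncomputable def sP (hMinternal : DirectSum.IsInternal Mdeg) (m₀ : M) (p : ℕ) :
    (sgFilt Bdeg p) →ₗ[K] M :=
  proj hMinternal p ∘ₗ actR (K := K) m₀ ∘ₗ (sgFilt Bdeg p).subtype

theorem sP_apply (hMinternal : DirectSum.IsInternal Mdeg) (m₀ : M) (p : ℕ)
    (x : (sgFilt Bdeg p)) :
    sP (Bdeg := Bdeg) hMinternal m₀ p x = proj hMinternal p ((x : B) • m₀) := rfl

theorem ker_gr_le_ker_sP (hMinternal : DirectSum.IsInternal Mdeg)
    (hMsmul : ∀ p q : ℕ, ∀ b ∈ Bdeg p, ∀ v ∈ Mdeg q, b • v ∈ sgFilt Mdeg (p + q))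
    {m₀ : M} (hm₀ : m₀ ∈ Mdeg 0)
    (gr : ∀ p : ℕ, (sgFilt Bdeg p) →ₗ[K] G)
    (hker : ∀ (p : ℕ) (a : B) (ha : a ∈ sgFilt Bdeg p),
      gr p ⟨a, ha⟩ = 0 ↔ a ∈ sgFiltPrev Bdeg p) (p : ℕ) :
    LinearMap.ker (gr p) ≤ LinearMap.ker (sP (Bdeg := Bdeg) hMinternal m₀ p) := by
  intro x hx
  have hx' : (x : B) ∈ sgFiltPrev Bdeg p := (hker p (x : B) x.2).mp hx
  have hm₀' : m₀ ∈ sgFilt Mdeg 0 := by rw [sgFilt_zero]; exact hm₀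
  simp only [LinearMap.mem_ker, sP_apply]
  cases p with
  | zero =>
    have : (x : B) = 0 := hx'
    rw [this, zero_smul, map_zero]
  | succ p =>
    have hsm : (x : B) • m₀ ∈ sgFilt Mdeg p := by
      have := smul_filt (K := K) hMsmul (hx' : (x : B) ∈ sgFilt Bdeg p) hm₀'
      rwa [Nat.add_zero] at this
    exact proj_eq_zero_of_filt_lt hMinternal hsm (Nat.lt_succ_self p)

/-- The degree-`p` piece of the map `Gr(B) → Gr(M) ≅ M`. -/
noncomputable def thetaP (hMinternal : DirectSum.IsInternal Mdeg)
    (hMsmul : ∀ p q : ℕ, ∀ b ∈ Bdeg p, ∀ v ∈ Mdeg q, b • v ∈ sgFilt Mdeg (p + q))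
    {m₀ : M} (hm₀ : m₀ ∈ Mdeg 0)
    (gr : ∀ p : ℕ, (sgFilt Bdeg p) →ₗ[K] G)
    (hker : ∀ (p : ℕ) (a : B) (ha : a ∈ sgFilt Bdeg p),
      gr p ⟨a, ha⟩ = 0 ↔ a ∈ sgFiltPrev Bdeg p) (p : ℕ) :
    (LinearMap.range (gr p)) →ₗ[K] M :=
  (Submodule.liftQ (LinearMap.ker (gr p)) (sP (Bdeg := Bdeg) hMinternal m₀ p)
    (ker_gr_le_ker_sP hMinternal hMsmul hm₀ gr hker p)) ∘ₗ
    ((gr p).quotKerEquivRange.symm.toLinearMap)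

theorem thetaP_apply (hMinternal : DirectSum.IsInternal Mdeg)
    (hMsmul : ∀ p q : ℕ, ∀ b ∈ Bdeg p, ∀ v ∈ Mdeg q, b • v ∈ sgFilt Mdeg (p + q))
    {m₀ : M} (hm₀ : m₀ ∈ Mdeg 0)
    (gr : ∀ p : ℕ, (sgFilt Bdeg p) →ₗ[K] G)
    (hker : ∀ (p : ℕ) (a : B) (ha : a ∈ sgFilt Bdeg p),
      gr p ⟨a, ha⟩ = 0 ↔ a ∈ sgFiltPrev Bdeg p) (p : ℕ) (x : (sgFilt Bdeg p)) :
    thetaP hMinternal hMsmul hm₀ gr hker p ⟨gr p x, LinearMap.mem_range_self _ x⟩ =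
      proj hMinternal p ((x : B) • m₀) := by
  simp only [thetaP, LinearMap.comp_apply, LinearEquiv.coe_coe]
  rw [(gr p).quotKerEquivRange_symm_apply_image x (LinearMap.mem_range_self _ x),
    Submodule.mkQ_apply, Submodule.liftQ_apply, sP_apply]

/-- The canonical `K`-linear map `Gr(B) → M` realizing `Gr(M)`. -/
noncomputable def Theta (hMinternal : DirectSum.IsInternal Mdeg)
    (hMsmul : ∀ p q : ℕ, ∀ b ∈ Bdeg p, ∀ v ∈ Mdeg q, b • v ∈ sgFilt Mdeg (p + q))
    {m₀ : M} (hm₀ : m₀ ∈ Mdeg 0)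
    (gr : ∀ p : ℕ, (sgFilt Bdeg p) →ₗ[K] G)
    (hGinternal : DirectSum.IsInternal (fun p : ℕ => LinearMap.range (gr p)))
    (hker : ∀ (p : ℕ) (a : B) (ha : a ∈ sgFilt Bdeg p),
      gr p ⟨a, ha⟩ = 0 ↔ a ∈ sgFiltPrev Bdeg p) : G →ₗ[K] M :=
  (DirectSum.toModule K ℕ M (thetaP hMinternal hMsmul hm₀ gr hker)) ∘ₗ
    (LinearEquiv.ofBijective (DirectSum.coeLinearMap fun p => LinearMap.range (gr p))
      hGinternal).symm.toLinearMap

theorem Theta_gr (hMinternal : DirectSum.IsInternal Mdeg)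
    (hMsmul : ∀ p q : ℕ, ∀ b ∈ Bdeg p, ∀ v ∈ Mdeg q, b • v ∈ sgFilt Mdeg (p + q))
    {m₀ : M} (hm₀ : m₀ ∈ Mdeg 0)
    (gr : ∀ p : ℕ, (sgFilt Bdeg p) →ₗ[K] G)
    (hGinternal : DirectSum.IsInternal (fun p : ℕ => LinearMap.range (gr p)))
    (hker : ∀ (p : ℕ) (a : B) (ha : a ∈ sgFilt Bdeg p),
      gr p ⟨a, ha⟩ = 0 ↔ a ∈ sgFiltPrev Bdeg p) (p : ℕ) (x : (sgFilt Bdeg p)) :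
    Theta hMinternal hMsmul hm₀ gr hGinternal hker (gr p x) =
      proj hMinternal p ((x : B) • m₀) := by
  simp only [Theta, LinearMap.comp_apply, LinearEquiv.coe_coe]
  have hsymm : (LinearEquiv.ofBijective
      (DirectSum.coeLinearMap fun p => LinearMap.range (gr p)) hGinternal).symm (gr p x) =
      DirectSum.lof K ℕ (fun p => (LinearMap.range (gr p))) p
        ⟨gr p x, LinearMap.mem_range_self _ x⟩ := by
    rw [LinearEquiv.symm_apply_eq]
    show _ = DirectSum.coeLinearMap _ _
    rw [DirectSum.lof_eq_of, DirectSum.coeLinearMap_of]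
  rw [hsymm, DirectSum.toModule_lof, thetaP_apply]

end theta

section theta2

variable {B : Type v} [Ring B] [Algebra K B] {M : Type v} [AddCommGroup M] [Module K M]
  [Module B M] [IsScalarTower K B M]
variable {Bdeg : ℕ → Submodule K B} {Mdeg : ℕ → Submodule K M}
variable {G : Type w} [Ring G] [Algebra K G]

variable (hMinternal : DirectSum.IsInternal Mdeg)
  (hmul : ∀ m n : ℕ, ∀ a b : B, a ∈ Bdeg m → b ∈ Bdeg n → a * b ∈ sgFilt Bdeg (m + n))
  (hdeg0 : Bdeg 0 = Submodule.span K {(1 : B)})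
  (hgen : Algebra.adjoin K (Bdeg 1 : Set B) = ⊤)
  (hMsmul : ∀ p q : ℕ, ∀ b ∈ Bdeg p, ∀ v ∈ Mdeg q, b • v ∈ sgFilt Mdeg (p + q))
  {m₀ : M} (hm₀ : m₀ ∈ Mdeg 0) (hcyc : Submodule.span B {m₀} = ⊤)
  (hdim : ∀ n : ℕ, Module.finrank K (Mdeg n) = 1)
  (gr : ∀ p : ℕ, (sgFilt Bdeg p) →ₗ[K] G)
  (hGinternal : DirectSum.IsInternal (fun p : ℕ => LinearMap.range (gr p)))
  (hker : ∀ (p : ℕ) (a : B) (ha : a ∈ sgFilt Bdeg p),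
    gr p ⟨a, ha⟩ = 0 ↔ a ∈ sgFiltPrev Bdeg p)
  (hgrmul : ∀ (p q : ℕ) (a b : B) (ha : a ∈ sgFilt Bdeg p) (hb : b ∈ sgFilt Bdeg q)
    (hab : a * b ∈ sgFilt Bdeg (p + q)),
    gr p ⟨a, ha⟩ * gr q ⟨b, hb⟩ = gr (p + q) ⟨a * b, hab⟩)

include hmul hdeg0 hgen hcyc hdim in
/-- For any `m ∈ M_q` there is a homogeneous element of `Gr(B)` mapping to `m`. -/
theorem exists_homog_preimage {q : ℕ} {m : M} (hm : m ∈ Mdeg q) :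
    ∃ c : (sgFilt Bdeg q), (c : B) • m₀ = m ∧
      Theta hMinternal hMsmul hm₀ gr hGinternal hker (gr q c) = m := by
  have hmF : m ∈ (sgFilt Bdeg q).map (actR (K := K) m₀) := by
    rw [filt_cyclic hMinternal hmul hdeg0 hgen hMsmul hm₀ hcyc hdim q]
    exact le_sgFilt Mdeg le_rfl hm
  obtain ⟨b, hb, hbm⟩ := hmF
  refine ⟨⟨b, hb⟩, hbm, ?_⟩
  rw [Theta_gr hMinternal hMsmul hm₀ gr hGinternal hker q ⟨b, hb⟩]
  have : (b : B) • m₀ = m := hbm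
  rw [this, proj_of_mem_same hMinternal hm]

include hmul hdeg0 hgen hcyc hdim in
theorem Theta_surjective :
    Function.Surjective (Theta hMinternal hMsmul hm₀ gr hGinternal hker) := by
  rw [← LinearMap.range_eq_top]
  rw [eq_top_iff, ← hMinternal.submodule_iSup_eq_top]
  refine iSup_le fun q => ?_
  intro m hm
  obtain ⟨c, -, hc⟩ := exists_homog_preimage hMinternal hmul hdeg0 hgen hMsmul hm₀ hcyc hdim
    gr hGinternal hker hm
  exact ⟨gr q c, hc⟩

include hGinternal in
/-- Every element of `G` is a finite sum of homogeneous elements. -/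
theorem exists_rep (h : G) :
    ∃ (q : ℕ) (c : ∀ j : ℕ, (sgFilt Bdeg j)), (∀ j, q < j → c j = 0) ∧
      h = ∑ j ∈ Finset.Iic q, gr j (c j) := by
  classical
  have hh : h ∈ (⊤ : Submodule K G) := trivial
  rw [← hGinternal.submodule_iSup_eq_top] at hh
  refine Submodule.iSup_induction' (fun p => LinearMap.range (gr p))
    (motive := fun h _ => ∃ (q : ℕ) (c : ∀ j : ℕ, (sgFilt Bdeg j)),
    (∀ j, q < j → c j = 0) ∧ h = ∑ j ∈ Finset.Iic q, gr j (c j)) ?_ ?_ ?_ hh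
  · rintro i _ ⟨y, rfl⟩
    refine ⟨i, Function.update (fun _ => 0) i y, ?_, ?_⟩
    · intro j hj
      exact Function.update_of_ne (by omega) _ _
    · rw [Finset.sum_eq_single_of_mem i (Finset.mem_Iic.mpr le_rfl)]
      · rw [Function.update_self]
      · intro j _ hne
        rw [Function.update_of_ne hne, map_zero]
  · exact ⟨0, fun _ => 0, fun _ _ => rfl, by simp⟩
  · rintro x y hx hy ⟨q₁, c₁, h₁, rfl⟩ ⟨q₂, c₂, h₂, rfl⟩
    refine ⟨max q₁ q₂, fun j => c₁ j + c₂ j, ?_, ?_⟩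
    · intro j hj
      show c₁ j + c₂ j = 0
      rw [h₁ j (by omega), h₂ j (by omega), add_zero]
    · have e1 : ∑ j ∈ Finset.Iic q₁, gr j (c₁ j) = ∑ j ∈ Finset.Iic (max q₁ q₂), gr j (c₁ j) := by
        refine Finset.sum_subset ?_ ?_
        · intro j hj
          simp only [Finset.mem_Iic] at *
          omega
        · intro j _ hj
          simp only [Finset.mem_Iic] at hj
          rw [h₁ j (by omega), map_zero]
      have e2 : ∑ j ∈ Finset.Iic q₂, gr j (c₂ j) = ∑ j ∈ Finset.Iic (max q₁ q₂), gr j (c₂ j) := by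
        refine Finset.sum_subset ?_ ?_
        · intro j hj
          simp only [Finset.mem_Iic] at *
          omega
        · intro j _ hj
          simp only [Finset.mem_Iic] at hj
          rw [h₂ j (by omega), map_zero]
      rw [e1, e2, ← Finset.sum_add_distrib]
      refine Finset.sum_congr rfl fun j _ => ?_
      rw [map_add]

include hmul hgrmul in
/-- `ker Θ` is stable under left multiplication. -/
theorem Theta_mul_eq_zero {h : G}
    (hh : Theta hMinternal hMsmul hm₀ gr hGinternal hker h = 0) (g : G) :
    Theta hMinternal hMsmul hm₀ gr hGinternal hker (g * h) = 0 := by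
  classical
  set Θ := Theta hMinternal hMsmul hm₀ gr hGinternal hker with hΘ
  obtain ⟨q, c, hc0, rfl⟩ := exists_rep gr hGinternal h
  -- the homogeneous components of `Θ h` all vanish
  have hcomp : ∀ j ∈ Finset.Iic q, proj hMinternal j ((c j : B) • m₀) = 0 := by
    intro k hk
    have hsum : Θ (∑ j ∈ Finset.Iic q, gr j (c j)) =
        ∑ j ∈ Finset.Iic q, proj hMinternal j ((c j : B) • m₀) := by
      rw [map_sum]
      exact Finset.sum_congr rfl fun j _ =>
        Theta_gr hMinternal hMsmul hm₀ gr hGinternal hker j (c j)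
    have h0 : ∑ j ∈ Finset.Iic q, proj hMinternal j ((c j : B) • m₀) = 0 := by
      rw [← hsum]; exact hh
    have := congrArg (proj hMinternal k) h0
    rw [map_sum, map_zero] at this
    rw [← this]
    symm
    rw [Finset.sum_eq_single_of_mem k hk]
    · exact proj_of_mem_same hMinternal (proj_mem hMinternal k _)
    · intro j _ hne
      exact proj_of_mem_ne hMinternal (proj_mem hMinternal j _) hne
  -- each homogeneous component of `h` moves `m₀` into a lower filtration step
  have hprev : ∀ j ∈ Finset.Iic q, ((c j : B) • m₀) ∈ sgFiltPrev Mdeg j := by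
    intro j hj
    have hm₀' : m₀ ∈ sgFilt Mdeg 0 := by rw [sgFilt_zero]; exact hm₀
    have hmem : (c j : B) • m₀ ∈ sgFilt Mdeg j := by
      have := smul_filt (K := K) hMsmul (c j).2 hm₀'
      rwa [Nat.add_zero] at this
    exact (mem_sgFiltPrev_iff_proj_eq_zero hMinternal hmem).mpr (hcomp j hj)
  -- reduce to homogeneous `g`
  have hS : ∀ (p : ℕ) (x : (sgFilt Bdeg p)),
      Θ (gr p x * ∑ j ∈ Finset.Iic q, gr j (c j)) = 0 := by
    intro p x
    rw [Finset.mul_sum, map_sum]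
    refine Finset.sum_eq_zero fun j hj => ?_
    have hmulmem : (x : B) * (c j : B) ∈ sgFilt Bdeg (p + j) :=
      mul_filt (K := K) hmul x.2 (c j).2
    rw [show gr p x * gr j (c j) = gr (p + j) ⟨(x : B) * (c j : B), hmulmem⟩ from
      hgrmul p j (x : B) (c j : B) x.2 (c j).2 hmulmem]
    rw [hΘ, Theta_gr hMinternal hMsmul hm₀ gr hGinternal hker (p + j)]
    have hsm : ((x : B) * (c j : B)) • m₀ = (x : B) • ((c j : B) • m₀) := mul_smul _ _ _
    rw [hsm]
    cases j with
    | zero =>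
      have h0 : ((c 0 : B) • m₀) = 0 := hprev 0 hj
      rw [h0, smul_zero, map_zero]
    | succ j =>
      have hmem : ((c (j+1) : B) • m₀) ∈ sgFilt Mdeg j := hprev (j+1) hj
      have : (x : B) • ((c (j+1) : B) • m₀) ∈ sgFilt Mdeg (p + j) :=
        smul_filt (K := K) hMsmul x.2 hmem
      exact proj_eq_zero_of_filt_lt hMinternal this (by omega)
  have hg : g ∈ (⊤ : Submodule K G) := trivial
  rw [← hGinternal.submodule_iSup_eq_top] at hg
  refine Submodule.iSup_induction' (fun p => LinearMap.range (gr p))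
    (motive := fun g _ => Θ (g * ∑ j ∈ Finset.Iic q, gr j (c j)) = 0) ?_ ?_ ?_ hg
  · rintro p _ ⟨x, rfl⟩
    exact hS p x
  · show Θ (0 * ∑ j ∈ Finset.Iic q, gr j (c j)) = 0
    rw [zero_mul, map_zero]
  · intro x y _ _ ihx ihy
    show Θ ((x + y) * ∑ j ∈ Finset.Iic q, gr j (c j)) = 0
    rw [add_mul, map_add, ihx, ihy, add_zero]

end theta2


section final

variable {B : Type v} [Ring B] [Algebra K B] {M : Type v} [AddCommGroup M] [Module K M]
  [Module B M] [IsScalarTower K B M]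
variable {Bdeg : ℕ → Submodule K B} {Mdeg : ℕ → Submodule K M}
variable {G : Type w} [Ring G] [Algebra K G]

/-- The annihilator of `gr(m₀)`: a left ideal of `Gr(B)`. -/
noncomputable def Iann (hMinternal : DirectSum.IsInternal Mdeg)
    (hmul : ∀ m n : ℕ, ∀ a b : B, a ∈ Bdeg m → b ∈ Bdeg n → a * b ∈ sgFilt Bdeg (m + n))
    (hdeg0 : Bdeg 0 = Submodule.span K {(1 : B)})
    (hgen : Algebra.adjoin K (Bdeg 1 : Set B) = ⊤)
    (hMsmul : ∀ p q : ℕ, ∀ b ∈ Bdeg p, ∀ v ∈ Mdeg q, b • v ∈ sgFilt Mdeg (p + q))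
    {m₀ : M} (hm₀ : m₀ ∈ Mdeg 0) (hcyc : Submodule.span B {m₀} = ⊤)
    (hdim : ∀ n : ℕ, Module.finrank K (Mdeg n) = 1)
    (gr : ∀ p : ℕ, (sgFilt Bdeg p) →ₗ[K] G)
    (hGinternal : DirectSum.IsInternal (fun p : ℕ => LinearMap.range (gr p)))
    (hker : ∀ (p : ℕ) (a : B) (ha : a ∈ sgFilt Bdeg p),
      gr p ⟨a, ha⟩ = 0 ↔ a ∈ sgFiltPrev Bdeg p)
    (hgrmul : ∀ (p q : ℕ) (a b : B) (ha : a ∈ sgFilt Bdeg p) (hb : b ∈ sgFilt Bdeg q)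
      (hab : a * b ∈ sgFilt Bdeg (p + q)),
      gr p ⟨a, ha⟩ * gr q ⟨b, hb⟩ = gr (p + q) ⟨a * b, hab⟩) : Submodule G G where
  carrier := {g : G | Theta hMinternal hMsmul hm₀ gr hGinternal hker g = 0}
  add_mem' := by
    intro a b ha hb
    simp only [Set.mem_setOf_eq, map_add] at *
    rw [ha, hb, add_zero]
  zero_mem' := by simp only [Set.mem_setOf_eq, map_zero]
  smul_mem' := by
    intro g x hx
    simp only [Set.mem_setOf_eq] at *
    rw [smul_eq_mul]
    exact Theta_mul_eq_zero hMinternal hmul hMsmul hm₀ gr hGinternal hker hgrmul hx g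

theorem mem_Iann_iff (hMinternal : DirectSum.IsInternal Mdeg)
    (hmul : ∀ m n : ℕ, ∀ a b : B, a ∈ Bdeg m → b ∈ Bdeg n → a * b ∈ sgFilt Bdeg (m + n))
    (hdeg0 : Bdeg 0 = Submodule.span K {(1 : B)})
    (hgen : Algebra.adjoin K (Bdeg 1 : Set B) = ⊤)
    (hMsmul : ∀ p q : ℕ, ∀ b ∈ Bdeg p, ∀ v ∈ Mdeg q, b • v ∈ sgFilt Mdeg (p + q))
    {m₀ : M} (hm₀ : m₀ ∈ Mdeg 0) (hcyc : Submodule.span B {m₀} = ⊤)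
    (hdim : ∀ n : ℕ, Module.finrank K (Mdeg n) = 1)
    (gr : ∀ p : ℕ, (sgFilt Bdeg p) →ₗ[K] G)
    (hGinternal : DirectSum.IsInternal (fun p : ℕ => LinearMap.range (gr p)))
    (hker : ∀ (p : ℕ) (a : B) (ha : a ∈ sgFilt Bdeg p),
      gr p ⟨a, ha⟩ = 0 ↔ a ∈ sgFiltPrev Bdeg p)
    (hgrmul : ∀ (p q : ℕ) (a b : B) (ha : a ∈ sgFilt Bdeg p) (hb : b ∈ sgFilt Bdeg q)
      (hab : a * b ∈ sgFilt Bdeg (p + q)),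
      gr p ⟨a, ha⟩ * gr q ⟨b, hb⟩ = gr (p + q) ⟨a * b, hab⟩) (g : G) :
    g ∈ Iann hMinternal hmul hdeg0 hgen hMsmul hm₀ hcyc hdim gr hGinternal hker hgrmul ↔
      Theta hMinternal hMsmul hm₀ gr hGinternal hker g = 0 := Iff.rfl

/-- The induced map `Gr(B)/I → M`. -/
noncomputable def ThetaBar (hMinternal : DirectSum.IsInternal Mdeg)
    (hmul : ∀ m n : ℕ, ∀ a b : B, a ∈ Bdeg m → b ∈ Bdeg n → a * b ∈ sgFilt Bdeg (m + n))
    (hdeg0 : Bdeg 0 = Submodule.span K {(1 : B)})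
    (hgen : Algebra.adjoin K (Bdeg 1 : Set B) = ⊤)
    (hMsmul : ∀ p q : ℕ, ∀ b ∈ Bdeg p, ∀ v ∈ Mdeg q, b • v ∈ sgFilt Mdeg (p + q))
    {m₀ : M} (hm₀ : m₀ ∈ Mdeg 0) (hcyc : Submodule.span B {m₀} = ⊤)
    (hdim : ∀ n : ℕ, Module.finrank K (Mdeg n) = 1)
    (gr : ∀ p : ℕ, (sgFilt Bdeg p) →ₗ[K] G)
    (hGinternal : DirectSum.IsInternal (fun p : ℕ => LinearMap.range (gr p)))
    (hker : ∀ (p : ℕ) (a : B) (ha : a ∈ sgFilt Bdeg p),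
      gr p ⟨a, ha⟩ = 0 ↔ a ∈ sgFiltPrev Bdeg p)
    (hgrmul : ∀ (p q : ℕ) (a b : B) (ha : a ∈ sgFilt Bdeg p) (hb : b ∈ sgFilt Bdeg q)
      (hab : a * b ∈ sgFilt Bdeg (p + q)),
      gr p ⟨a, ha⟩ * gr q ⟨b, hb⟩ = gr (p + q) ⟨a * b, hab⟩) :
    (G ⧸ Iann hMinternal hmul hdeg0 hgen hMsmul hm₀ hcyc hdim gr hGinternal hker hgrmul) →ₗ[K] M :=
  (Submodule.liftQ ((Iann hMinternal hmul hdeg0 hgen hMsmul hm₀ hcyc hdim gr hGinternal hker hgrmul).restrictScalars K)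
      (Theta hMinternal hMsmul hm₀ gr hGinternal hker)
      (fun g hg => LinearMap.mem_ker.mpr hg)) ∘ₗ
    ((Submodule.Quotient.restrictScalarsEquiv K
      (Iann hMinternal hmul hdeg0 hgen hMsmul hm₀ hcyc hdim gr hGinternal hker hgrmul)).symm.toLinearMap)

theorem ThetaBar_mk (hMinternal : DirectSum.IsInternal Mdeg)
    (hmul : ∀ m n : ℕ, ∀ a b : B, a ∈ Bdeg m → b ∈ Bdeg n → a * b ∈ sgFilt Bdeg (m + n))
    (hdeg0 : Bdeg 0 = Submodule.span K {(1 : B)})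
    (hgen : Algebra.adjoin K (Bdeg 1 : Set B) = ⊤)
    (hMsmul : ∀ p q : ℕ, ∀ b ∈ Bdeg p, ∀ v ∈ Mdeg q, b • v ∈ sgFilt Mdeg (p + q))
    {m₀ : M} (hm₀ : m₀ ∈ Mdeg 0) (hcyc : Submodule.span B {m₀} = ⊤)
    (hdim : ∀ n : ℕ, Module.finrank K (Mdeg n) = 1)
    (gr : ∀ p : ℕ, (sgFilt Bdeg p) →ₗ[K] G)
    (hGinternal : DirectSum.IsInternal (fun p : ℕ => LinearMap.range (gr p)))
    (hker : ∀ (p : ℕ) (a : B) (ha : a ∈ sgFilt Bdeg p),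
      gr p ⟨a, ha⟩ = 0 ↔ a ∈ sgFiltPrev Bdeg p)
    (hgrmul : ∀ (p q : ℕ) (a b : B) (ha : a ∈ sgFilt Bdeg p) (hb : b ∈ sgFilt Bdeg q)
      (hab : a * b ∈ sgFilt Bdeg (p + q)),
      gr p ⟨a, ha⟩ * gr q ⟨b, hb⟩ = gr (p + q) ⟨a * b, hab⟩) (g : G) :
    ThetaBar hMinternal hmul hdeg0 hgen hMsmul hm₀ hcyc hdim gr hGinternal hker hgrmul (Submodule.Quotient.mk g) =
      Theta hMinternal hMsmul hm₀ gr hGinternal hker g := by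
  simp only [ThetaBar, LinearMap.comp_apply, LinearEquiv.coe_coe,
    Submodule.Quotient.restrictScalarsEquiv_symm_mk, Submodule.liftQ_apply]

theorem ThetaBar_bijective (hMinternal : DirectSum.IsInternal Mdeg)
    (hmul : ∀ m n : ℕ, ∀ a b : B, a ∈ Bdeg m → b ∈ Bdeg n → a * b ∈ sgFilt Bdeg (m + n))
    (hdeg0 : Bdeg 0 = Submodule.span K {(1 : B)})
    (hgen : Algebra.adjoin K (Bdeg 1 : Set B) = ⊤)
    (hMsmul : ∀ p q : ℕ, ∀ b ∈ Bdeg p, ∀ v ∈ Mdeg q, b • v ∈ sgFilt Mdeg (p + q))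
    {m₀ : M} (hm₀ : m₀ ∈ Mdeg 0) (hcyc : Submodule.span B {m₀} = ⊤)
    (hdim : ∀ n : ℕ, Module.finrank K (Mdeg n) = 1)
    (gr : ∀ p : ℕ, (sgFilt Bdeg p) →ₗ[K] G)
    (hGinternal : DirectSum.IsInternal (fun p : ℕ => LinearMap.range (gr p)))
    (hker : ∀ (p : ℕ) (a : B) (ha : a ∈ sgFilt Bdeg p),
      gr p ⟨a, ha⟩ = 0 ↔ a ∈ sgFiltPrev Bdeg p)
    (hgrmul : ∀ (p q : ℕ) (a b : B) (ha : a ∈ sgFilt Bdeg p) (hb : b ∈ sgFilt Bdeg q)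
      (hab : a * b ∈ sgFilt Bdeg (p + q)),
      gr p ⟨a, ha⟩ * gr q ⟨b, hb⟩ = gr (p + q) ⟨a * b, hab⟩) :
    Function.Bijective (ThetaBar hMinternal hmul hdeg0 hgen hMsmul hm₀ hcyc hdim gr hGinternal hker hgrmul) := by
  constructor
  · refine LinearMap.ker_eq_bot.mp ?_
    refine (Submodule.eq_bot_iff _).mpr fun x hx => ?_
    obtain ⟨g, rfl⟩ := Submodule.Quotient.mk_surjective _ x
    have hx' := LinearMap.mem_ker.mp hx
    rw [ThetaBar_mk] at hx'
    exact (Submodule.Quotient.mk_eq_zero _).mpr hx'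
  · intro m
    obtain ⟨g, hg⟩ := Theta_surjective hMinternal hmul hdeg0 hgen hMsmul hm₀ hcyc hdim
      gr hGinternal hker m
    exact ⟨Submodule.Quotient.mk g, by rw [ThetaBar_mk, hg]⟩

/-- The `K`-linear isomorphism `Gr(B)/I ≃ M`. -/
noncomputable def Eequiv (hMinternal : DirectSum.IsInternal Mdeg)
    (hmul : ∀ m n : ℕ, ∀ a b : B, a ∈ Bdeg m → b ∈ Bdeg n → a * b ∈ sgFilt Bdeg (m + n))
    (hdeg0 : Bdeg 0 = Submodule.span K {(1 : B)})
    (hgen : Algebra.adjoin K (Bdeg 1 : Set B) = ⊤)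
    (hMsmul : ∀ p q : ℕ, ∀ b ∈ Bdeg p, ∀ v ∈ Mdeg q, b • v ∈ sgFilt Mdeg (p + q))
    {m₀ : M} (hm₀ : m₀ ∈ Mdeg 0) (hcyc : Submodule.span B {m₀} = ⊤)
    (hdim : ∀ n : ℕ, Module.finrank K (Mdeg n) = 1)
    (gr : ∀ p : ℕ, (sgFilt Bdeg p) →ₗ[K] G)
    (hGinternal : DirectSum.IsInternal (fun p : ℕ => LinearMap.range (gr p)))
    (hker : ∀ (p : ℕ) (a : B) (ha : a ∈ sgFilt Bdeg p),
      gr p ⟨a, ha⟩ = 0 ↔ a ∈ sgFiltPrev Bdeg p)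
    (hgrmul : ∀ (p q : ℕ) (a b : B) (ha : a ∈ sgFilt Bdeg p) (hb : b ∈ sgFilt Bdeg q)
      (hab : a * b ∈ sgFilt Bdeg (p + q)),
      gr p ⟨a, ha⟩ * gr q ⟨b, hb⟩ = gr (p + q) ⟨a * b, hab⟩) :
    (G ⧸ Iann hMinternal hmul hdeg0 hgen hMsmul hm₀ hcyc hdim gr hGinternal hker hgrmul) ≃ₗ[K] M :=
  LinearEquiv.ofBijective (ThetaBar hMinternal hmul hdeg0 hgen hMsmul hm₀ hcyc hdim gr hGinternal hker hgrmul)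
    (ThetaBar_bijective hMinternal hmul hdeg0 hgen hMsmul hm₀ hcyc hdim gr hGinternal hker hgrmul)

theorem Eequiv_mk (hMinternal : DirectSum.IsInternal Mdeg)
    (hmul : ∀ m n : ℕ, ∀ a b : B, a ∈ Bdeg m → b ∈ Bdeg n → a * b ∈ sgFilt Bdeg (m + n))
    (hdeg0 : Bdeg 0 = Submodule.span K {(1 : B)})
    (hgen : Algebra.adjoin K (Bdeg 1 : Set B) = ⊤)
    (hMsmul : ∀ p q : ℕ, ∀ b ∈ Bdeg p, ∀ v ∈ Mdeg q, b • v ∈ sgFilt Mdeg (p + q))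
    {m₀ : M} (hm₀ : m₀ ∈ Mdeg 0) (hcyc : Submodule.span B {m₀} = ⊤)
    (hdim : ∀ n : ℕ, Module.finrank K (Mdeg n) = 1)
    (gr : ∀ p : ℕ, (sgFilt Bdeg p) →ₗ[K] G)
    (hGinternal : DirectSum.IsInternal (fun p : ℕ => LinearMap.range (gr p)))
    (hker : ∀ (p : ℕ) (a : B) (ha : a ∈ sgFilt Bdeg p),
      gr p ⟨a, ha⟩ = 0 ↔ a ∈ sgFiltPrev Bdeg p)
    (hgrmul : ∀ (p q : ℕ) (a b : B) (ha : a ∈ sgFilt Bdeg p) (hb : b ∈ sgFilt Bdeg q)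
      (hab : a * b ∈ sgFilt Bdeg (p + q)),
      gr p ⟨a, ha⟩ * gr q ⟨b, hb⟩ = gr (p + q) ⟨a * b, hab⟩) (g : G) :
    Eequiv hMinternal hmul hdeg0 hgen hMsmul hm₀ hcyc hdim gr hGinternal hker hgrmul (Submodule.Quotient.mk g) =
      Theta hMinternal hMsmul hm₀ gr hGinternal hker g := by
  rw [Eequiv, LinearEquiv.ofBijective_apply, ThetaBar_mk]

theorem Eequiv_symm_eq_mk (hMinternal : DirectSum.IsInternal Mdeg)
    (hmul : ∀ m n : ℕ, ∀ a b : B, a ∈ Bdeg m → b ∈ Bdeg n → a * b ∈ sgFilt Bdeg (m + n))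
    (hdeg0 : Bdeg 0 = Submodule.span K {(1 : B)})
    (hgen : Algebra.adjoin K (Bdeg 1 : Set B) = ⊤)
    (hMsmul : ∀ p q : ℕ, ∀ b ∈ Bdeg p, ∀ v ∈ Mdeg q, b • v ∈ sgFilt Mdeg (p + q))
    {m₀ : M} (hm₀ : m₀ ∈ Mdeg 0) (hcyc : Submodule.span B {m₀} = ⊤)
    (hdim : ∀ n : ℕ, Module.finrank K (Mdeg n) = 1)
    (gr : ∀ p : ℕ, (sgFilt Bdeg p) →ₗ[K] G)
    (hGinternal : DirectSum.IsInternal (fun p : ℕ => LinearMap.range (gr p)))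
    (hker : ∀ (p : ℕ) (a : B) (ha : a ∈ sgFilt Bdeg p),
      gr p ⟨a, ha⟩ = 0 ↔ a ∈ sgFiltPrev Bdeg p)
    (hgrmul : ∀ (p q : ℕ) (a b : B) (ha : a ∈ sgFilt Bdeg p) (hb : b ∈ sgFilt Bdeg q)
      (hab : a * b ∈ sgFilt Bdeg (p + q)),
      gr p ⟨a, ha⟩ * gr q ⟨b, hb⟩ = gr (p + q) ⟨a * b, hab⟩) {m : M} {g : G}
    (h : Theta hMinternal hMsmul hm₀ gr hGinternal hker g = m) :
    (Eequiv hMinternal hmul hdeg0 hgen hMsmul hm₀ hcyc hdim gr hGinternal hker hgrmul).symm m = Submodule.Quotient.mk g := by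
  rw [LinearEquiv.symm_apply_eq, Eequiv_mk, h]

end final

section transfer

variable {V : Type*} {W : Type*} [AddCommGroup V] [Module K V] [AddCommGroup W] [Module K W]

theorem iSupIndep_map_equiv (e : V ≃ₗ[K] W) {A : ℕ → Submodule K V} (h : iSupIndep A) :
    iSupIndep (fun i => (A i).map (e : V →ₗ[K] W)) := by
  intro i
  have h1 := h i
  rw [disjoint_iff] at h1 ⊢
  have e1 : (⨆ j, ⨆ (_ : j ≠ i), (A j).map (e : V →ₗ[K] W)) =
      ((⨆ j, ⨆ (_ : j ≠ i), A j)).map (e : V →ₗ[K] W) := by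
    rw [Submodule.map_iSup]
    refine iSup_congr fun j => ?_
    rw [Submodule.map_iSup]
  show (A i).map (e : V →ₗ[K] W) ⊓ (⨆ j, ⨆ (_ : j ≠ i), (A j).map (e : V →ₗ[K] W)) = ⊥
  rw [e1, ← Submodule.map_inf (e : V →ₗ[K] W) e.injective, h1, Submodule.map_bot]

end transfer

end FSGaux

/-- A realization of the associated graded module `Gr(M) = ⊕_n F_n(M)/F_{n−1}(M)` of a
semi-graded module `M` over a semi-graded algebra `B`, as a graded module over a
realization `G` of `Gr(B)`: the degree-`n` piece of `Gr(M)` is the image of `F_n(M)`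
under a `K`-linear map with kernel `F_{n−1}(M)`, and the `G`-action is induced by the
`B`-action via the formula
`(b_p + F_{p−1}(B)) • (m + F_{n−1}(M)) = b_p • m + F_{p+n−1}(M)`. -/
structure GrOfPointModule {K : Type u} {B : Type v} [Field K] [Ring B] [Algebra K B]
    (Bdeg : ℕ → Submodule K B)
    (G : Type w) [Ring G] [Algebra K G] (gr : ∀ p : ℕ, (sgFilt Bdeg p) →ₗ[K] G)
    {M : Type v} [AddCommGroup M] [Module K M] [Module B M] [IsScalarTower K B M]
    (Mdeg : ℕ → Submodule K M) where
  N : Type w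
  [acg : AddCommGroup N]
  [modK : Module K N]
  [modG : Module G N]
  [tower : IsScalarTower K G N]
  deg : ℕ → Submodule K N
  internal : DirectSum.IsInternal deg
  smul_graded : ∀ p q : ℕ, ∀ u ∈ LinearMap.range (gr p), ∀ v ∈ deg q, u • v ∈ deg (p + q)
  grM : ∀ n : ℕ, (sgFilt Mdeg n) →ₗ[K] N
  range_grM : ∀ n : ℕ, LinearMap.range (grM n) = deg n
  ker_grM : ∀ (n : ℕ) (m : M) (hm : m ∈ sgFilt Mdeg n),
    grM n ⟨m, hm⟩ = 0 ↔ m ∈ sgFiltPrev Mdeg n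
  compat : ∀ (p n : ℕ) (b : B) (m : M) (hb : b ∈ sgFilt Bdeg p)
    (hm : m ∈ sgFilt Mdeg n) (hbm : b • m ∈ sgFilt Mdeg (p + n)),
    gr p ⟨b, hb⟩ • grM n ⟨m, hm⟩ = grM (p + n) ⟨b • m, hbm⟩

attribute [instance] GrOfPointModule.acg GrOfPointModule.modK GrOfPointModule.modG
  GrOfPointModule.tower

/-- let `B` be a finitely semi-graded `K`-algebra generated in degree 1
with `B_0 = K`, and `M` a point module for `B` with `M = B·m₀`, `m₀ ∈ M_0`. Then the
formula `(b_p + F_{p−1}(B))·(m + F_{n−1}(M)) := b_p m + F_{p+n−1}(M)` is well defined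
and makes `Gr(M)` a graded left `Gr(B)`-module; moreover `Gr(M)` is cyclic, generated
in degree 0 by `m₀ + F_{−1}(M)`, and `dim_K Gr(M)_n = 1` for all `n`. In particular
`Gr(M)` is a point module for the finitely graded algebra `Gr(B)`. -/
theorem FSG_pointModule_associatedGraded {K : Type u} {B : Type v} [Field K] [Ring B]
    [Algebra K B] (Bdeg : ℕ → Submodule K B)
    -- B is finitely semi-graded, generated in degree 1, with B₀ = K
    (hinternal : DirectSum.IsInternal Bdeg)
    (hmul : ∀ m n : ℕ, ∀ a b : B, a ∈ Bdeg m → b ∈ Bdeg n →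
      a * b ∈ ⨆ k ∈ Set.Iic (m + n), Bdeg k)
    (hdeg0 : Bdeg 0 = Submodule.span K {(1 : B)})
    (hfin : ∀ n : ℕ, FiniteDimensional K (Bdeg n))
    (hgen : Algebra.adjoin K (Bdeg 1 : Set B) = ⊤)
    -- G is a realization of the associated graded ring Gr(B)
    (G : Type w) [Ring G] [Algebra K G] (gr : ∀ p : ℕ, (sgFilt Bdeg p) →ₗ[K] G)
    (hGinternal : DirectSum.IsInternal (fun p : ℕ => LinearMap.range (gr p)))
    (hker : ∀ (p : ℕ) (a : B) (ha : a ∈ sgFilt Bdeg p),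
      gr p ⟨a, ha⟩ = 0 ↔ a ∈ sgFiltPrev Bdeg p)
    (hgrmul : ∀ (p q : ℕ) (a b : B) (ha : a ∈ sgFilt Bdeg p) (hb : b ∈ sgFilt Bdeg q)
      (hab : a * b ∈ sgFilt Bdeg (p + q)),
      gr p ⟨a, ha⟩ * gr q ⟨b, hb⟩ = gr (p + q) ⟨a * b, hab⟩)
    (halg : ∀ (k : K) (hk : algebraMap K B k ∈ sgFilt Bdeg 0),
      gr 0 ⟨algebraMap K B k, hk⟩ = algebraMap K G k)
    -- M is a point module for B, generated by m₀ ∈ M₀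
    {M : Type v} [AddCommGroup M] [Module K M] [Module B M] [IsScalarTower K B M]
    (Mdeg : ℕ → Submodule K M)
    (hMinternal : DirectSum.IsInternal Mdeg)
    (hMsmul : ∀ p q : ℕ, ∀ b ∈ Bdeg p, ∀ v ∈ Mdeg q,
      b • v ∈ ⨆ k ∈ Set.Iic (p + q), Mdeg k)
    (m₀ : M) (hm₀ : m₀ ∈ Mdeg 0) (hcyc : Submodule.span B {m₀} = ⊤)
    (hdim : ∀ n : ℕ, Module.finrank K (Mdeg n) = 1) :
    ∃ Q : GrOfPointModule Bdeg G gr Mdeg,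
      (∀ h₀ : m₀ ∈ sgFilt Mdeg 0,
        Q.grM 0 ⟨m₀, h₀⟩ ∈ Q.deg 0 ∧
        Submodule.span G {Q.grM 0 ⟨m₀, h₀⟩} = ⊤) ∧
      ∀ n : ℕ, Module.finrank K (Q.deg n) = 1 := by
  classical
  have hmul' : ∀ m n : ℕ, ∀ a b : B, a ∈ Bdeg m → b ∈ Bdeg n →
      a * b ∈ sgFilt Bdeg (m + n) := hmul
  have hMsmul' : ∀ p q : ℕ, ∀ b ∈ Bdeg p, ∀ v ∈ Mdeg q,
      b • v ∈ sgFilt Mdeg (p + q) := hMsmul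
  set Θ := FSGaux.Theta hMinternal hMsmul' hm₀ gr hGinternal hker with hΘ
  set I := FSGaux.Iann hMinternal hmul' hdeg0 hgen hMsmul' hm₀ hcyc hdim gr hGinternal hker
    hgrmul with hIdef
  set E := FSGaux.Eequiv hMinternal hmul' hdeg0 hgen hMsmul' hm₀ hcyc hdim gr hGinternal hker
    hgrmul with hEdef
  refine ⟨{ N := G ⧸ I
          , deg := fun n => (Mdeg n).map (E.symm : M →ₗ[K] G ⧸ I)
          , internal := ?_
          , smul_graded := ?_
          , grM := fun n => (E.symm : M →ₗ[K] G ⧸ I) ∘ₗ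
              (FSGaux.proj hMinternal n ∘ₗ (sgFilt Mdeg n).subtype)
          , range_grM := ?_
          , ker_grM := ?_
          , compat := ?_ }, fun h₀ => ⟨?_, ?_⟩, ?_⟩
  -- internal
  · rw [DirectSum.isInternal_submodule_iff_iSupIndep_and_iSup_eq_top]
    constructor
    · exact FSGaux.iSupIndep_map_equiv E.symm hMinternal.submodule_iSupIndep
    · rw [← Submodule.map_iSup, hMinternal.submodule_iSup_eq_top, Submodule.map_top,
        LinearEquiv.range]
  -- smul_graded
  · intro p q u hu v hv
    obtain ⟨x, rfl⟩ := hu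
    obtain ⟨m, hm, rfl⟩ := hv
    obtain ⟨c, hcm, hc⟩ := FSGaux.exists_homog_preimage hMinternal hmul' hdeg0 hgen hMsmul'
      hm₀ hcyc hdim gr hGinternal hker hm
    have hsymm : (E.symm : M →ₗ[K] G ⧸ I) m = Submodule.Quotient.mk (gr q c) :=
      FSGaux.Eequiv_symm_eq_mk hMinternal hmul' hdeg0 hgen hMsmul' hm₀ hcyc hdim gr
        hGinternal hker hgrmul hc
    rw [hsymm]
    have hbc : (x : B) * (c : B) ∈ sgFilt Bdeg (p + q) :=
      FSGaux.mul_filt (K := K) hmul' x.2 c.2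
    have hmk : gr p x • (Submodule.Quotient.mk (gr q c) : G ⧸ I) =
        Submodule.Quotient.mk (gr (p + q) ⟨(x : B) * (c : B), hbc⟩) := by
      rw [← hgrmul p q (x : B) (c : B) x.2 c.2 hbc, ← smul_eq_mul,
        Submodule.Quotient.mk_smul]
    rw [hmk, Submodule.mem_map_equiv, LinearEquiv.symm_symm]
    have := FSGaux.Eequiv_mk hMinternal hmul' hdeg0 hgen hMsmul' hm₀ hcyc hdim gr
      hGinternal hker hgrmul (gr (p + q) ⟨(x : B) * (c : B), hbc⟩)
    rw [this, FSGaux.Theta_gr hMinternal hMsmul' hm₀ gr hGinternal hker (p + q)]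
    exact FSGaux.proj_mem hMinternal (p + q) _
  -- range_grM
  · intro n
    have hr : LinearMap.range (FSGaux.proj hMinternal n ∘ₗ (sgFilt Mdeg n).subtype) = Mdeg n := by
      apply le_antisymm
      · rintro _ ⟨x, rfl⟩
        exact FSGaux.proj_mem hMinternal n _
      · intro m hm
        exact ⟨⟨m, FSGaux.le_sgFilt Mdeg le_rfl hm⟩, FSGaux.proj_of_mem_same hMinternal hm⟩
    rw [LinearMap.range_comp, hr]
  -- ker_grM
  · intro n m hm
    constructor
    · intro h
      have h' : E.symm (FSGaux.proj hMinternal n m) = 0 := h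
      have h0 : FSGaux.proj hMinternal n m = 0 := (LinearEquiv.map_eq_zero_iff E.symm).mp h'
      exact (FSGaux.mem_sgFiltPrev_iff_proj_eq_zero hMinternal hm).mpr h0
    · intro h
      have h0 : FSGaux.proj hMinternal n m = 0 :=
        (FSGaux.mem_sgFiltPrev_iff_proj_eq_zero hMinternal hm).mp h
      show E.symm (FSGaux.proj hMinternal n m) = 0
      rw [h0, map_zero]
  -- compat
  · intro p n b m hb hm hbm
    have hpm : FSGaux.proj hMinternal n m ∈ Mdeg n := FSGaux.proj_mem hMinternal n m
    obtain ⟨c, hcm, hc⟩ := FSGaux.exists_homog_preimage hMinternal hmul' hdeg0 hgen hMsmul'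
      hm₀ hcyc hdim gr hGinternal hker hpm
    have hbc : b * (c : B) ∈ sgFilt Bdeg (p + n) := FSGaux.mul_filt (K := K) hmul' hb c.2
    have hproj : FSGaux.proj hMinternal (p + n) ((b * (c : B)) • m₀) =
        FSGaux.proj hMinternal (p + n) (b • m) := by
      rw [mul_smul, hcm]
      have hsub := FSGaux.sub_proj_mem hMinternal hm
      cases n with
      | zero =>
        have h0 : m - FSGaux.proj hMinternal 0 m = 0 := hsub
        have hmp : FSGaux.proj hMinternal 0 m = m := (sub_eq_zero.mp h0).symm
        rw [hmp]
      | succ k =>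
        have hsm : b • (m - FSGaux.proj hMinternal (k + 1) m) ∈ sgFilt Mdeg (p + k) :=
          FSGaux.smul_filt (K := K) hMsmul' hb hsub
        have h0 : FSGaux.proj hMinternal (p + (k + 1))
            (b • (m - FSGaux.proj hMinternal (k + 1) m)) = 0 :=
          FSGaux.proj_eq_zero_of_filt_lt hMinternal hsm (by omega)
        have hexp : b • m = b • FSGaux.proj hMinternal (k + 1) m +
            b • (m - FSGaux.proj hMinternal (k + 1) m) := by
          rw [← smul_add, add_sub_cancel]
        conv_rhs => rw [hexp]
        rw [map_add, h0, add_zero]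
    have hE1 : E.symm (FSGaux.proj hMinternal n m) =
        Submodule.Quotient.mk (gr n c) :=
      FSGaux.Eequiv_symm_eq_mk hMinternal hmul' hdeg0 hgen hMsmul' hm₀ hcyc hdim gr
        hGinternal hker hgrmul hc
    have hE2 : E.symm (FSGaux.proj hMinternal (p + n) (b • m)) =
        Submodule.Quotient.mk (gr (p + n) ⟨b * (c : B), hbc⟩) := by
      refine FSGaux.Eequiv_symm_eq_mk hMinternal hmul' hdeg0 hgen hMsmul' hm₀ hcyc hdim gr
        hGinternal hker hgrmul ?_
      rw [FSGaux.Theta_gr hMinternal hMsmul' hm₀ gr hGinternal hker (p + n)]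
      exact hproj
    show gr p ⟨b, hb⟩ • E.symm (FSGaux.proj hMinternal n m) =
      E.symm (FSGaux.proj hMinternal (p + n) (b • m))
    rw [hE1, hE2]
    calc gr p ⟨b, hb⟩ • (Submodule.Quotient.mk (gr n c) : G ⧸ I)
        = Submodule.Quotient.mk (gr p ⟨b, hb⟩ * gr n c) := by
          rw [← smul_eq_mul, Submodule.Quotient.mk_smul]
      _ = Submodule.Quotient.mk (gr (p + n) ⟨b * (c : B), hbc⟩) :=
          congrArg Submodule.Quotient.mk (hgrmul p n b (c : B) hb c.2 hbc)
  -- grM 0 m₀ ∈ deg 0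
  · show E.symm (FSGaux.proj hMinternal 0 m₀) ∈ (Mdeg 0).map (E.symm : M →ₗ[K] G ⧸ I)
    exact Submodule.mem_map_of_mem (FSGaux.proj_mem hMinternal 0 m₀)
  -- span
  · have h1B : (1 : B) ∈ sgFilt Bdeg 0 := by
      rw [FSGaux.sgFilt_zero, hdeg0]
      exact Submodule.mem_span_singleton_self 1
    have h1B' : algebraMap K B 1 ∈ sgFilt Bdeg 0 := by rw [map_one]; exact h1B
    have hgr1 : gr 0 ⟨(1 : B), h1B⟩ = 1 := by
      calc gr 0 ⟨(1 : B), h1B⟩ = gr 0 ⟨algebraMap K B 1, h1B'⟩ := by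
            congr 1
            exact Subtype.ext (map_one (algebraMap K B)).symm
        _ = algebraMap K G 1 := halg 1 h1B'
        _ = 1 := map_one _
    have hkey : E.symm (FSGaux.proj hMinternal 0 m₀) = (Submodule.Quotient.mk (1 : G) : G ⧸ I) := by
      rw [FSGaux.proj_of_mem_same hMinternal hm₀]
      refine FSGaux.Eequiv_symm_eq_mk hMinternal hmul' hdeg0 hgen hMsmul' hm₀ hcyc hdim gr
        hGinternal hker hgrmul ?_
      rw [← hgr1, FSGaux.Theta_gr hMinternal hMsmul' hm₀ gr hGinternal hker 0, one_smul]
      exact FSGaux.proj_of_mem_same hMinternal hm₀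
    show Submodule.span G {E.symm (FSGaux.proj hMinternal 0 m₀)} = ⊤
    rw [hkey]
    refine eq_top_iff.mpr fun x _ => ?_
    obtain ⟨g, rfl⟩ := Submodule.Quotient.mk_surjective _ x
    have hx : (Submodule.Quotient.mk g : G ⧸ I) =
        g • (Submodule.Quotient.mk (1 : G) : G ⧸ I) := by
      rw [← Submodule.Quotient.mk_smul, smul_eq_mul, mul_one]
    rw [hx]
    exact Submodule.smul_mem _ g (Submodule.mem_span_singleton_self _)
  -- finrank
  · intro n
    show Module.finrank K ((Mdeg n).map (E.symm : M →ₗ[K] G ⧸ I)) = 1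
    rw [LinearEquiv.finrank_map_eq]
    exact hdim n
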